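/- Let φ₁, φ₂ : ℂ → ℂ be functions holomorphic on {|y| > R} with φᵢ(y)/y → 1 as |y| → ∞, and suppose |φ₁(y)| = |φ₂(y)| for all |y| > R. Then φ₁ = φ₂ on {|y| > R}. -/

import Mathlib

open Filter Bornology

lemma exterior_pathConnected (R : ℝ) (hR : 0 < R) :
    IsPathConnected {y : ℂ | R < ‖y‖} := by
  have hrank : 1 < Module.rank ℝ ℂ := by
    rw [Complex.rank_real_complex]; norm_num
  have hbn : ‖((R + 1 : ℝ) : ℂ)‖ = R + 1 := by
    rw [Complex.norm_real, Real.norm_eq_abs, abs_of_pos]; linarith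
  have hb : ((R + 1 : ℝ) : ℂ) ∈ {y : ℂ | R < ‖y‖} := by
    rw [Set.mem_setOf_eq, hbn]; linarith
  have hbs : ((R + 1 : ℝ) : ℂ) ∈ Metric.sphere (0 : ℂ) (R + 1) := by
    rw [Metric.mem_sphere, dist_zero_right, hbn]
  have hsub : Metric.sphere (0 : ℂ) (R + 1) ⊆ {y : ℂ | R < ‖y‖} := by
    intro z hz
    rw [Metric.mem_sphere, dist_zero_right] at hz
    rw [Set.mem_setOf_eq, hz]; linarith
  refine ⟨((R + 1 : ℝ) : ℂ), hb, ?_⟩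
  intro x hx
  have hx' : R < ‖x‖ := hx
  have hxne : ‖x‖ ≠ 0 := ne_of_gt (lt_trans hR hx')
  set c : ℝ := (R + 1) / ‖x‖ with hc
  have hcpos : 0 < c := by positivity
  set x' : ℂ := c • x with hx'def
  have hnx' : ‖x'‖ = R + 1 := by
    rw [hx'def, norm_smul, Real.norm_eq_abs, abs_of_pos hcpos, hc,
      div_mul_cancel₀ _ hxne]
  have hx's : x' ∈ Metric.sphere (0 : ℂ) (R + 1) := by simp [hnx']
  have hseg : segment ℝ x x' ⊆ {y : ℂ | R < ‖y‖} := by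
    intro z hz
    rw [segment_eq_image] at hz
    obtain ⟨θ, hθ, rfl⟩ := hz
    show R < ‖(1 - θ) • x + θ • x'‖
    have hrw : (1 - θ) • x + θ • x' = ((1 - θ) + θ * c) • x := by
      rw [hx'def, smul_smul, add_smul]
    rw [hrw]
    have hnn : 0 ≤ (1 - θ) + θ * c := by nlinarith [hθ.1, hθ.2]
    have : ‖((1 - θ) + θ * c) • x‖ = ((1 - θ) + θ * c) * ‖x‖ := by
      rw [norm_smul, Real.norm_eq_abs, abs_of_nonneg hnn]
    rw [this]
    have hcx : c * ‖x‖ = R + 1 := by rw [hc, div_mul_cancel₀ _ hxne]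
    have key : (1 - θ + θ * c) * ‖x‖ = (1 - θ) * ‖x‖ + θ * (c * ‖x‖) := by ring
    rw [hcx] at key
    nlinarith [mul_nonneg (by linarith [hθ.2] : (0:ℝ) ≤ 1 - θ)
      (by linarith : (0:ℝ) ≤ ‖x‖ - R), hθ.1, hθ.2]
  have j1 : JoinedIn {y : ℂ | R < ‖y‖} x x' := by
    have := ((convex_segment x x').isPathConnected ⟨x, left_mem_segment ℝ x x'⟩).joinedIn
      x (left_mem_segment ℝ x x') x' (right_mem_segment ℝ x x')
    exact this.mono hseg
  have j2 : JoinedIn {y : ℂ | R < ‖y‖} x' ((R + 1 : ℝ) : ℂ) := by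
    have := (isPathConnected_sphere hrank (0 : ℂ) (by linarith : (0:ℝ) ≤ R + 1)).joinedIn
      x' hx's _ hbs
    exact this.mono hsub
  exact (j1.trans j2).symm

theorem bottcher_uniqueness (R : ℝ) (hR : 0 < R) (φ₁ φ₂ : ℂ → ℂ)
    (h₁ : DifferentiableOn ℂ φ₁ {y : ℂ | R < ‖y‖})
    (h₂ : DifferentiableOn ℂ φ₂ {y : ℂ | R < ‖y‖})
    (h₁v : ∀ y : ℂ, R < ‖y‖ → φ₁ y ≠ 0)
    (h₂v : ∀ y : ℂ, R < ‖y‖ → φ₂ y ≠ 0)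
    (hlim₁ : Filter.Tendsto (fun y : ℂ => φ₁ y / y) (Bornology.cobounded ℂ) (nhds 1))
    (hlim₂ : Filter.Tendsto (fun y : ℂ => φ₂ y / y) (Bornology.cobounded ℂ) (nhds 1))
    (habs : ∀ y : ℂ, R < ‖y‖ → ‖φ₁ y‖ = ‖φ₂ y‖) :
    ∀ y : ℂ, R < ‖y‖ → φ₁ y = φ₂ y := by
  set U : Set ℂ := {y : ℂ | R < ‖y‖} with hU
  have hUopen : IsOpen U := isOpen_lt continuous_const continuous_norm
  have hUconn : IsPreconnected U := (exterior_pathConnected R hR).isConnected.isPreconnected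
  set g : ℂ → ℂ := fun y => φ₁ y / φ₂ y with hg
  have hgd : DifferentiableOn ℂ g U := h₁.div h₂ (fun y hy => h₂v y hy)
  have hgnorm : ∀ y ∈ U, ‖g y‖ = 1 := by
    intro y hy
    rw [hg]
    simp only [norm_div]
    rw [habs y hy, div_self (by simpa using (h₂v y hy))]
  have hb : ((R + 1 : ℝ) : ℂ) ∈ U := by
    simp only [hU, Set.mem_setOf_eq, Complex.norm_real,
      abs_of_pos (by linarith : (0:ℝ) < R + 1), Real.norm_eq_abs]
    linarith
  have hmax : IsMaxOn (norm ∘ g) U ((R + 1 : ℝ) : ℂ) := by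
    intro y hy
    simp only [Function.comp_apply, Set.mem_setOf_eq]
    rw [hgnorm _ hy, hgnorm _ hb]
  have heq : Set.EqOn g (Function.const ℂ (g ((R + 1 : ℝ) : ℂ))) U :=
    Complex.eqOn_of_isPreconnected_of_isMaxOn_norm hUconn hUopen hgd hb hmax
  -- show the constant is 1
  have hlim : Tendsto g (cobounded ℂ) (nhds 1) := by
    have h := hlim₁.div hlim₂ one_ne_zero
    simp only [div_one] at h
    apply h.congr'
    filter_upwards [tendsto_norm_cobounded_atTop.eventually_gt_atTop R] with y hy
    have hy0 : y ≠ 0 := by intro h0; rw [h0] at hy; simp at hy; linarith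
    simp only [Pi.div_apply, hg]
    rw [div_div_div_cancel_right₀ hy0]
  have hconst : Tendsto g (cobounded ℂ) (nhds (g ((R + 1 : ℝ) : ℂ))) := by
    apply Tendsto.congr' _ tendsto_const_nhds
    filter_upwards [tendsto_norm_cobounded_atTop.eventually_gt_atTop R] with y hy
    exact (heq hy).symm
  have h1 : g ((R + 1 : ℝ) : ℂ) = 1 := tendsto_nhds_unique hconst hlim
  intro y hy
  have := heq hy
  rw [Function.const_apply, h1, hg] at this
  exact (div_eq_one_iff_eq (h₂v y hy)).mp this
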